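/- Let T : ℝ₊₊^N → ℝ₊₊^N be an MSP mapping, let ‖·‖ be a monotone norm on ℝ^N, and let p_max > 0. Consider the epigraph problem: maximize γ over (γ, p) ∈ ℝ₊₊ × ℝ₊₊^N subject to p ≥ γ T(p) (coordinatewise) and ‖p‖ ≤ p_max. Then there exists an optimal solution (γ*, p*) of this problem that achieves equality in all constraints, i.e., p* = γ* T(p*) and ‖p*‖ = p_max. -/

import Mathlib

open MeasureTheory Filter

/-- The open positive cone in `ℝ^N`. -/
def PosCone (N : ℕ) : Set (Fin N → ℝ) := {x | ∀ i, 0 < x i}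

/-- A monotonic, scalable, and positive (MSP) function on the positive cone `ℝ₊₊^N`:
(0) it is positive on the cone, (i) monotone on the cone, (ii) scalable, and
(iii) its infimum over the cone is positive. -/
def IsMSPFun {N : ℕ} (f : (Fin N → ℝ) → ℝ) : Prop :=
  (∀ x : Fin N → ℝ, (∀ i, 0 < x i) → 0 < f x) ∧
  (∀ x y : Fin N → ℝ, (∀ i, 0 < x i) → (∀ i, 0 < y i) → x ≤ y → f x ≤ f y) ∧
  (∀ α : ℝ, 1 < α → ∀ x : Fin N → ℝ, (∀ i, 0 < x i) → f (α • x) < α * f x) ∧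
  0 < sInf (f '' PosCone N)

/-- An MSP mapping: every coordinate function is an MSP function. -/
def IsMSPMap {N : ℕ} (T : (Fin N → ℝ) → (Fin N → ℝ)) : Prop :=
  ∀ i, IsMSPFun (fun x => T x i)

/-- A monotone norm on `ℝ^N`: a genuine norm that is order-preserving on the
nonnegative cone. -/
def IsMonoNorm {N : ℕ} (nrm : (Fin N → ℝ) → ℝ) : Prop :=
  (∀ x : Fin N → ℝ, nrm x = 0 ↔ x = 0) ∧
  (∀ (a : ℝ) (x : Fin N → ℝ), nrm (a • x) = |a| * nrm x) ∧
  (∀ x y : Fin N → ℝ, nrm (x + y) ≤ nrm x + nrm y) ∧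
  (∀ x y : Fin N → ℝ, (∀ i, 0 ≤ x i) → (∀ i, 0 ≤ y i) → x ≤ y → nrm x ≤ nrm y)

open Topology

section aux
variable {N : ℕ}

lemma my_nrm_nonneg {nrm : (Fin N → ℝ) → ℝ} (h : IsMonoNorm nrm) (x : Fin N → ℝ) :
    0 ≤ nrm x := by
  obtain ⟨h0, hh, ht, -⟩ := h
  have h1 : nrm ((-1:ℝ) • x) = nrm x := by rw [hh]; norm_num
  have h2 : nrm (x + (-1:ℝ) • x) ≤ nrm x + nrm ((-1:ℝ) • x) := ht _ _
  have h3 : x + (-1:ℝ) • x = 0 := by funext j; simp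
  rw [h3, (h0 0).2 rfl, h1] at h2
  linarith

lemma my_single_eq (i : Fin N) (a : ℝ) : a • (Pi.single i 1 : Fin N → ℝ) = Pi.single i a := by
  funext j
  by_cases hj : j = i
  · subst hj; simp
  · simp [Pi.single_eq_of_ne hj]

lemma my_nrm_single_pos {nrm : (Fin N → ℝ) → ℝ} (h : IsMonoNorm nrm) (i : Fin N) :
    0 < nrm (Pi.single i (1:ℝ)) := by
  rcases lt_or_eq_of_le (my_nrm_nonneg h (Pi.single i (1:ℝ))) with hlt | heq
  · exact hlt
  · exfalso
    have h0 : (Pi.single i (1:ℝ) : Fin N → ℝ) = 0 := (h.1 _).1 heq.symm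
    have h1 : (Pi.single i (1:ℝ) : Fin N → ℝ) i = 0 := by rw [h0]; rfl
    rw [Pi.single_eq_same] at h1
    exact one_ne_zero h1

lemma my_coord_le_nrm {nrm : (Fin N → ℝ) → ℝ} (h : IsMonoNorm nrm)
    {p : Fin N → ℝ} (hp : ∀ i, 0 ≤ p i) (i : Fin N) :
    p i * nrm (Pi.single i (1:ℝ)) ≤ nrm p := by
  have hle : Pi.single i (p i) ≤ p := by
    intro j
    by_cases hj : j = i
    · subst hj; rw [Pi.single_eq_same]
    · rw [Pi.single_eq_of_ne hj]; exact hp j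
  have hnn : ∀ j, (0:ℝ) ≤ (Pi.single i (p i) : Fin N → ℝ) j := by
    intro j
    by_cases hj : j = i
    · subst hj; rw [Pi.single_eq_same]; exact hp j
    · rw [Pi.single_eq_of_ne hj]
  have h1 : nrm (Pi.single i (p i)) ≤ nrm p := h.2.2.2 _ _ hnn hp hle
  rw [← my_single_eq i (p i), h.2.1, abs_of_nonneg (hp i)] at h1
  exact h1

lemma my_nrm_le_sum {nrm : (Fin N → ℝ) → ℝ} (h : IsMonoNorm nrm) (x : Fin N → ℝ) :
    nrm x ≤ ∑ i, |x i| * nrm (Pi.single i (1:ℝ)) := by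
  have hsum := Finset.le_sum_of_subadditive nrm ((h.1 0).2 rfl).le h.2.2.1 Finset.univ
    (fun i => Pi.single i (x i))
  rw [Finset.univ_sum_single] at hsum
  calc nrm x ≤ ∑ i : Fin N, nrm (Pi.single i (x i)) := hsum
    _ = ∑ i, |x i| * nrm (Pi.single i (1:ℝ)) := by
        refine Finset.sum_congr rfl fun i _ => ?_
        rw [← my_single_eq i (x i), h.2.1]

lemma my_nrm_sub_abs {nrm : (Fin N → ℝ) → ℝ} (h : IsMonoNorm nrm) (x y : Fin N → ℝ) :
    |nrm x - nrm y| ≤ nrm (x - y) := by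
  have hneg : ∀ z : Fin N → ℝ, nrm (-z) = nrm z := by
    intro z
    have : (-z) = (-1:ℝ) • z := by funext j; simp
    rw [this, h.2.1]; norm_num
  have h1 : nrm x ≤ nrm (x - y) + nrm y := by
    have := h.2.2.1 (x - y) y
    simpa using this
  have h2 : nrm y ≤ nrm (x - y) + nrm x := by
    have := h.2.2.1 (y - x) x
    have h3 : y - x = -(x - y) := by ring
    rw [h3, hneg] at this
    simpa using this
  rw [abs_sub_le_iff]
  constructor <;> linarith

lemma my_nrm_tendsto {nrm : (Fin N → ℝ) → ℝ} (h : IsMonoNorm nrm)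
    {p : ℕ → (Fin N → ℝ)} {a : Fin N → ℝ} (hp : Tendsto p atTop (𝓝 a)) :
    Tendsto (fun n => nrm (p n)) atTop (𝓝 (nrm a)) := by
  have hcoord : ∀ i, Tendsto (fun n => p n i) atTop (𝓝 (a i)) := fun i =>
    (tendsto_pi_nhds.1 hp) i
  have hg : Tendsto (fun n => ∑ i, |p n i - a i| * nrm (Pi.single i (1:ℝ))) atTop (𝓝 0) := by
    have : Tendsto (fun n => ∑ i, |p n i - a i| * nrm (Pi.single i (1:ℝ))) atTop
        (𝓝 (∑ i : Fin N, |a i - a i| * nrm (Pi.single i (1:ℝ)))) := by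
      refine tendsto_finset_sum _ fun i _ => ?_
      exact (((hcoord i).sub tendsto_const_nhds).abs).mul_const _
    simpa using this
  have habs : Tendsto (fun n => |nrm (p n) - nrm a|) atTop (𝓝 0) := by
    refine squeeze_zero (fun n => abs_nonneg _) (fun n => ?_) hg
    exact le_trans (my_nrm_sub_abs h _ _) (my_nrm_le_sum h _)
  have := habs
  rw [← tendsto_sub_nhds_zero_iff]
  exact (tendsto_zero_iff_abs_tendsto_zero _).2 habs

lemma my_msp_tendsto {f : (Fin N → ℝ) → ℝ} (hf : IsMSPFun f)
    {x : ℕ → (Fin N → ℝ)} {a : Fin N → ℝ}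
    (hx : ∀ n i, 0 < x n i) (ha : ∀ i, 0 < a i)
    (h : Tendsto x atTop (𝓝 a)) :
    Tendsto (fun n => f (x n)) atTop (𝓝 (f a)) := by
  obtain ⟨hpos, hmono, hscale, -⟩ := hf
  have hfa : 0 < f a := hpos a ha
  have hcoord : ∀ i, Tendsto (fun n => x n i) atTop (𝓝 (a i)) := fun i =>
    (tendsto_pi_nhds.1 h) i
  rw [tendsto_order]
  constructor
  · intro b hb
    rcases le_or_gt b 0 with hb0 | hb0
    · exact Eventually.of_forall fun n => lt_of_le_of_lt hb0 (hpos _ (hx n))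
    · set α := f a / b with hα
      have hα1 : 1 < α := (one_lt_div hb0).2 hb
      have hev : ∀ᶠ n in atTop, ∀ i, a i ≤ α * x n i := by
        rw [eventually_all]
        intro i
        have : a i / α < a i := by
          rw [div_lt_iff₀ (by linarith)]
          nlinarith [ha i]
        filter_upwards [(hcoord i).eventually (eventually_gt_nhds this)] with n hn
        rw [div_lt_iff₀ (by linarith)] at hn
        linarith
      filter_upwards [hev] with n hn
      have h1 : f a ≤ f (α • x n) := by
        refine hmono a (α • x n) ha (fun i => ?_) ?_
        · have := hx n i
          have : (α • x n) i = α * x n i := by simp [smul_eq_mul]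
          rw [this]; nlinarith [hx n i]
        · intro i
          have hsm : (α • x n) i = α * x n i := by simp [smul_eq_mul]
          rw [hsm]; exact hn i
      have h2 : f (α • x n) < α * f (x n) := hscale α hα1 (x n) (hx n)
      have : f a < α * f (x n) := lt_of_le_of_lt h1 h2
      rw [hα] at this
      calc b = (f a) / (f a / b) := by field_simp
        _ < f (x n) := by
            rw [div_lt_iff₀ (by positivity)]
            nlinarith
  · intro b hb
    set α := b / f a with hα
    have hα1 : 1 < α := (one_lt_div hfa).2 hb
    have hev : ∀ᶠ n in atTop, ∀ i, x n i ≤ α * a i := by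
      rw [eventually_all]
      intro i
      have : a i < α * a i := by nlinarith [ha i]
      exact ((hcoord i).eventually (eventually_lt_nhds this)).mono fun n hn => hn.le
    filter_upwards [hev] with n hn
    have h1 : f (x n) ≤ f (α • a) := by
      refine hmono (x n) (α • a) (hx n) (fun i => ?_) ?_
      · have hsm : (α • a) i = α * a i := by simp [smul_eq_mul]
        rw [hsm]; nlinarith [ha i]
      · intro i
        have hsm : (α • a) i = α * a i := by simp [smul_eq_mul]
        rw [hsm]; exact hn i
    have h2 : f (α • a) < α * f a := hscale α hα1 a ha
    calc f (x n) < α * f a := lt_of_le_of_lt h1 h2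
      _ = b := by rw [hα]; field_simp

end aux

/-- The epigraph-form max-min problem admits an optimal solution with all constraints
active: there is a feasible pair `(γ*, p*)` with `p* = γ* • T(p*)`, `‖p*‖ = p_max`,
and `γ ≤ γ*` for every feasible pair `(γ, p)`. -/
theorem stmt12 {N : ℕ} (hN : 0 < N)
    (T : (Fin N → ℝ) → (Fin N → ℝ)) (hT : IsMSPMap T)
    (nrm : (Fin N → ℝ) → ℝ) (hnrm : IsMonoNorm nrm)
    (pmax : ℝ) (hpmax : 0 < pmax) :
    ∃ (γs : ℝ) (ps : Fin N → ℝ),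
      0 < γs ∧ (∀ i, 0 < ps i) ∧
      (∀ i, ps i = γs * T ps i) ∧ nrm ps = pmax ∧
      ∀ (γ : ℝ) (p : Fin N → ℝ), 0 < γ → (∀ i, 0 < p i) →
        (∀ i, γ * T p i ≤ p i) → nrm p ≤ pmax → γ ≤ γs := by
  classical
  have i0 : Fin N := ⟨0, hN⟩
  -- infimum lower bounds for T
  set c : Fin N → ℝ := fun i => sInf ((fun x => T x i) '' PosCone N) with hc_def
  have hc : ∀ i, 0 < c i := fun i => (hT i).2.2.2
  have hcle : ∀ p : Fin N → ℝ, (∀ i, 0 < p i) → ∀ i, c i ≤ T p i := by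
    intro p hp i
    refine csInf_le ⟨0, ?_⟩ ⟨p, hp, rfl⟩
    rintro y ⟨x, hx, rfl⟩
    exact ((hT i).1 x hx).le
  have hTpos : ∀ p : Fin N → ℝ, (∀ i, 0 < p i) → ∀ i, 0 < T p i := fun p hp i => (hT i).1 p hp
  have he : ∀ i, 0 < nrm (Pi.single i (1:ℝ)) := my_nrm_single_pos hnrm
  -- coordinate upper bound from the norm constraint
  have hcoordbd : ∀ p : Fin N → ℝ, (∀ i, 0 ≤ p i) → nrm p ≤ pmax →
      ∀ i, p i ≤ pmax / nrm (Pi.single i (1:ℝ)) := by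
    intro p hp hple i
    rw [le_div_iff₀ (he i)]
    exact le_trans (my_coord_le_nrm hnrm hp i) hple
  -- the feasible set
  set A : Set ℝ := {γ | 0 < γ ∧ ∃ p : Fin N → ℝ, (∀ i, 0 < p i) ∧
      (∀ i, γ * T p i ≤ p i) ∧ nrm p ≤ pmax} with hA_def
  have hAbdd : BddAbove A := by
    refine ⟨(pmax / nrm (Pi.single i0 (1:ℝ))) / c i0, ?_⟩
    rintro γ ⟨hγ, p, hp, hfe, hle⟩
    have h1 : γ * c i0 ≤ p i0 :=
      le_trans (mul_le_mul_of_nonneg_left (hcle p hp i0) hγ.le) (hfe i0)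
    have h2 : p i0 ≤ pmax / nrm (Pi.single i0 (1:ℝ)) := hcoordbd p (fun i => (hp i).le) hle i0
    rw [le_div_iff₀ (hc i0)]
    linarith
  -- A is nonempty
  have hone : nrm (fun _ : Fin N => (1:ℝ)) > 0 := by
    rcases lt_or_eq_of_le (my_nrm_nonneg hnrm (fun _ => 1)) with hlt | heq
    · exact hlt
    · exfalso
      have h0 : (fun _ : Fin N => (1:ℝ)) = 0 := (hnrm.1 _).1 heq.symm
      have := congrFun h0 i0
      norm_num at this
  obtain ⟨γ0, hγ0A⟩ : A.Nonempty := by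
    set δ : ℝ := pmax / nrm (fun _ : Fin N => (1:ℝ)) with hδ_def
    have hδ : 0 < δ := div_pos hpmax hone
    set p1 : Fin N → ℝ := fun _ => δ with hp1_def
    have hp1pos : ∀ i, 0 < p1 i := fun _ => hδ
    have hp1nrm : nrm p1 = pmax := by
      have : p1 = δ • (fun _ : Fin N => (1:ℝ)) := by funext j; simp [hp1_def, smul_eq_mul]
      rw [this, hnrm.2.1, abs_of_pos hδ, hδ_def]
      field_simp
    obtain ⟨i1, -, hi1⟩ := Finset.exists_min_image Finset.univ (fun i => δ / T p1 i)
      ⟨i0, Finset.mem_univ i0⟩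
    refine ⟨δ / T p1 i1, div_pos hδ (hTpos p1 hp1pos i1), p1, hp1pos, ?_, hp1nrm.le⟩
    intro i
    have h1 : δ / T p1 i1 ≤ δ / T p1 i := hi1 i (Finset.mem_univ i)
    calc (δ / T p1 i1) * T p1 i ≤ (δ / T p1 i) * T p1 i :=
          mul_le_mul_of_nonneg_right h1 (hTpos p1 hp1pos i).le
      _ = δ := div_mul_cancel₀ δ (ne_of_gt (hTpos p1 hp1pos i))
      _ = p1 i := rfl
  have hAne : A.Nonempty := ⟨γ0, hγ0A⟩
  set γs : ℝ := sSup A with hγs_def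
  have hγ0γs : γ0 ≤ γs := le_csSup hAbdd hγ0A
  have hγspos : 0 < γs := lt_of_lt_of_le hγ0A.1 hγ0γs
  -- choose near-optimal feasible sequence
  have hchoice : ∀ n : ℕ, ∃ γ ∈ A, γs - γs / (n + 2) < γ := by
    intro n
    refine exists_lt_of_lt_csSup hAne ?_
    have : 0 < γs / (n + 2) := by positivity
    linarith
  choose γseq hγmem hγgt using hchoice
  have hγpos : ∀ n, 0 < γseq n := fun n => (hγmem n).1
  have hγle : ∀ n, γseq n ≤ γs := fun n => le_csSup hAbdd (hγmem n)
  have hγhalf : ∀ n, γs / 2 < γseq n := by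
    intro n
    have h1 : γs / ((n:ℝ) + 2) ≤ γs / 2 := by
      apply div_le_div_of_nonneg_left hγspos.le (by norm_num)
      · norm_num
    have := hγgt n
    linarith
  choose pseq hppos hpfe hpnrm using fun n => (hγmem n).2
  -- convergence of γseq
  have hγconv : Tendsto γseq atTop (𝓝 γs) := by
    have hlow : Tendsto (fun n : ℕ => γs - γs / (n + 2)) atTop (𝓝 γs) := by
      have h2 : Tendsto (fun n : ℕ => γs / (n + 2)) atTop (𝓝 0) := by
        apply Tendsto.div_atTop (tendsto_const_nhds)
        exact tendsto_atTop_add_const_right atTop 2 tendsto_natCast_atTop_atTop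
      have := Tendsto.sub (tendsto_const_nhds : Tendsto (fun _ : ℕ => γs) atTop (𝓝 γs)) h2
      simpa using this
    exact tendsto_of_tendsto_of_tendsto_of_le_of_le hlow tendsto_const_nhds
      (fun n => (hγgt n).le) hγle
  -- the sequence lives in a compact box
  set lo : Fin N → ℝ := fun i => γs / 2 * c i with hlo_def
  set hi : Fin N → ℝ := fun i => pmax / nrm (Pi.single i (1:ℝ)) with hhi_def
  have hbox : ∀ n, pseq n ∈ Set.Icc lo hi := by
    intro n
    constructor
    · intro i
      have h1 : γseq n * c i ≤ pseq n i :=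
        le_trans (mul_le_mul_of_nonneg_left (hcle _ (hppos n) i) (hγpos n).le) (hpfe n i)
      have h2 : γs / 2 * c i ≤ γseq n * c i :=
        mul_le_mul_of_nonneg_right (hγhalf n).le (hc i).le
      exact le_trans h2 h1
    · intro i
      exact hcoordbd _ (fun j => (hppos n j).le) (hpnrm n) i
  obtain ⟨pbar, hpbarmem, φ, hφ, hconv⟩ :=
    (isCompact_Icc (a := lo) (b := hi)).tendsto_subseq hbox
  have hpbarpos : ∀ i, 0 < pbar i := by
    intro i
    have : lo i ≤ pbar i := hpbarmem.1 i
    have hloi : 0 < lo i := by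
      have h2 : lo i = γs / 2 * c i := by rw [hlo_def]
      rw [h2]; exact mul_pos (half_pos hγspos) (hc i)
    linarith
  have hγφ : Tendsto (fun n => γseq (φ n)) atTop (𝓝 γs) := hγconv.comp hφ.tendsto_atTop
  have hTφ : ∀ i, Tendsto (fun n => T (pseq (φ n)) i) atTop (𝓝 (T pbar i)) := by
    intro i
    exact my_msp_tendsto (hT i) (fun n => hppos (φ n)) hpbarpos hconv
  have hineq : ∀ i, γs * T pbar i ≤ pbar i := by
    intro i
    refine le_of_tendsto_of_tendsto' (hγφ.mul (hTφ i)) ((tendsto_pi_nhds.1 hconv) i) ?_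
    intro n
    exact hpfe (φ n) i
  have hpbarnrm : nrm pbar ≤ pmax :=
    le_of_tendsto (my_nrm_tendsto hnrm hconv) (Eventually.of_forall fun n => hpnrm (φ n))
  -- the decreasing iteration
  set q : ℕ → (Fin N → ℝ) := fun k => (fun p => γs • T p)^[k] pbar with hq_def
  have hq0 : q 0 = pbar := rfl
  have hqsucc : ∀ k, q (k + 1) = γs • T (q k) := by
    intro k
    show (fun p => γs • T p)^[k + 1] pbar = γs • T ((fun p => γs • T p)^[k] pbar)
    rw [Function.iterate_succ_apply']
  have hqkey : ∀ k, (∀ i, 0 < q k i) ∧ (q (k + 1) ≤ q k) := by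
    intro k
    induction k with
    | zero =>
      refine ⟨hpbarpos, ?_⟩
      intro i
      rw [hqsucc 0, hq0]
      simpa [smul_eq_mul] using hineq i
    | succ k ih =>
      obtain ⟨ihpos, ihle⟩ := ih
      have hpos1 : ∀ i, 0 < q (k + 1) i := by
        intro i
        rw [hqsucc k]
        have := hTpos (q k) ihpos i
        simpa [smul_eq_mul] using mul_pos hγspos this
      refine ⟨hpos1, ?_⟩
      intro i
      have hTle : T (q (k+1)) i ≤ T (q k) i := (hT i).2.1 _ _ hpos1 ihpos ihle
      have hmain : γs * T (q (k+1)) i ≤ γs * T (q k) i :=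
        mul_le_mul_of_nonneg_left hTle hγspos.le
      have e1 : q (k+1+1) i = γs * T (q (k+1)) i := by
        rw [hqsucc (k+1)]; simp [smul_eq_mul]
      have e2 : q (k+1) i = γs * T (q k) i := by
        rw [hqsucc k]; simp [smul_eq_mul]
      rw [e1]
      calc γs * T (q (k+1)) i ≤ γs * T (q k) i := hmain
        _ = q (k+1) i := e2.symm
  have hqpos : ∀ k i, 0 < q k i := fun k => (hqkey k).1
  have hqanti : Antitone q := antitone_nat_of_succ_le fun k => (hqkey k).2
  -- uniform lower bound
  set b : Fin N → ℝ := fun i => min (pbar i) (γs * c i) with hb_def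
  have hbpos : ∀ i, 0 < b i := fun i => lt_min (hpbarpos i) (mul_pos hγspos (hc i))
  have hqb : ∀ k i, b i ≤ q k i := by
    intro k i
    cases k with
    | zero => rw [hq0]; exact min_le_left _ _
    | succ k =>
      rw [hqsucc k]
      have h1 : γs * c i ≤ γs * T (q k) i :=
        mul_le_mul_of_nonneg_left (hcle _ (hqpos k) i) hγspos.le
      have h2 : (γs • T (q k)) i = γs * T (q k) i := by simp [smul_eq_mul]
      rw [h2]
      exact le_trans (min_le_right _ _) h1
  -- coordinatewise limits
  set qbar : Fin N → ℝ := fun i => ⨅ k, q k i with hqbar_def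
  have hqcoordconv : ∀ i, Tendsto (fun k => q k i) atTop (𝓝 (qbar i)) := by
    intro i
    apply tendsto_atTop_ciInf
    · intro m n hmn
      exact hqanti hmn i
    · exact ⟨b i, by rintro y ⟨k, rfl⟩; exact hqb k i⟩
  have hqconv : Tendsto q atTop (𝓝 qbar) := tendsto_pi_nhds.2 hqcoordconv
  have hqbarpos : ∀ i, 0 < qbar i := by
    intro i
    have : b i ≤ qbar i := le_ciInf fun k => hqb k i
    linarith [hbpos i]
  have hqbarle : ∀ k, qbar ≤ q k := by
    intro k i
    exact ciInf_le ⟨b i, by rintro y ⟨m, rfl⟩; exact hqb m i⟩ k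
  -- fixed point property
  have hfix : ∀ i, qbar i = γs * T qbar i := by
    intro i
    have h1 : Tendsto (fun k => q (k + 1) i) atTop (𝓝 (qbar i)) :=
      (hqcoordconv i).comp (tendsto_add_atTop_nat 1)
    have h2 : Tendsto (fun k => q (k + 1) i) atTop (𝓝 (γs * T qbar i)) := by
      have hTc : Tendsto (fun k => T (q k) i) atTop (𝓝 (T qbar i)) :=
        my_msp_tendsto (hT i) hqpos hqbarpos hqconv
      have := (tendsto_const_nhds : Tendsto (fun _ : ℕ => γs) atTop (𝓝 γs)).mul hTc
      refine this.congr fun k => ?_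
      rw [hqsucc k]
      simp [smul_eq_mul]
    exact tendsto_nhds_unique h1 h2
  -- norm bound for qbar
  have hqbarnrm : nrm qbar ≤ pmax := by
    have h1 : nrm qbar ≤ nrm pbar := by
      refine hnrm.2.2.2 _ _ (fun i => (hqbarpos i).le) (fun i => (hpbarpos i).le) ?_
      rw [← hq0]; exact hqbarle 0
    linarith
  -- the norm constraint is active
  have hqbarnrm_eq : nrm qbar = pmax := by
    by_contra hne
    have hlt : nrm qbar < pmax := lt_of_le_of_ne hqbarnrm hne
    have hnq : 0 < nrm qbar := by
      rcases lt_or_eq_of_le (my_nrm_nonneg hnrm qbar) with h | h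
      · exact h
      · exfalso
        have h0 : qbar = 0 := (hnrm.1 _).1 h.symm
        have := congrFun h0 i0
        have := hqbarpos i0
        simp [h0] at this
    set s : ℝ := pmax / nrm qbar with hs_def
    have hs1 : 1 < s := (one_lt_div hnq).2 hlt
    set p' : Fin N → ℝ := s • qbar with hp'_def
    have hp'pos : ∀ i, 0 < p' i := by
      intro i
      have : p' i = s * qbar i := by simp [hp'_def, smul_eq_mul]
      rw [this]
      exact mul_pos (by linarith) (hqbarpos i)
    have hp'nrm : nrm p' = pmax := by
      rw [hp'_def, hnrm.2.1, abs_of_pos (by linarith : (0:ℝ) < s), hs_def]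
      field_simp
    have hTstrict : ∀ i, T p' i < s * T qbar i := fun i =>
      (hT i).2.2.1 s hs1 qbar hqbarpos
    have hγlt : ∀ i, γs * T p' i < p' i := by
      intro i
      have h1 : γs * T p' i < γs * (s * T qbar i) :=
        mul_lt_mul_of_pos_left (hTstrict i) hγspos
      have h2 : p' i = s * (γs * T qbar i) := by
        have : p' i = s * qbar i := by simp [hp'_def, smul_eq_mul]
        rw [this, hfix i]
      rw [h2]; ring_nf; ring_nf at h1; linarith
    obtain ⟨i1, -, hi1⟩ := Finset.exists_min_image Finset.univ (fun i => p' i / T p' i)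
      ⟨i0, Finset.mem_univ i0⟩
    set γ' : ℝ := p' i1 / T p' i1 with hγ'_def
    have hγ'gt : γs < γ' := by
      rw [hγ'_def, lt_div_iff₀ (hTpos p' hp'pos i1)]
      linarith [hγlt i1]
    have hγ'A : γ' ∈ A := by
      refine ⟨lt_trans hγspos hγ'gt, p', hp'pos, ?_, hp'nrm.le⟩
      intro i
      have h1 : γ' ≤ p' i / T p' i := hi1 i (Finset.mem_univ i)
      calc γ' * T p' i ≤ (p' i / T p' i) * T p' i :=
            mul_le_mul_of_nonneg_right h1 (hTpos p' hp'pos i).le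
        _ = p' i := div_mul_cancel₀ (p' i) (ne_of_gt (hTpos p' hp'pos i))
    have : γ' ≤ γs := le_csSup hAbdd hγ'A
    linarith
  refine ⟨γs, qbar, hγspos, hqbarpos, hfix, hqbarnrm_eq, ?_⟩
  intro γ p hγ hp hfe hn
  exact le_csSup hAbdd ⟨hγ, p, hp, hfe, hn⟩
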